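/- For a standard normal random variable N and any y > 0, it holds that √(2/π) · exp(−y²/2)/(y + √(y²+4)) < P(N > y) ≤ √(2/π) · exp(−y²/2)/(y + √(y²+8/π)). -/

import Mathlib

open MeasureTheory ProbabilityTheory Real Set Filter

noncomputable def gtb_phi (x : ℝ) : ℝ := (Real.sqrt (2 * Real.pi))⁻¹ * Real.exp (-x^2/2)

lemma gtb_phi_eq : gaussianPDFReal 0 1 = gtb_phi := by
  ext x
  simp [gaussianPDFReal, gtb_phi]

lemma gtb_phi_pos (x : ℝ) : 0 < gtb_phi x := by
  have := Real.pi_pos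
  exact mul_pos (inv_pos.2 (Real.sqrt_pos.2 (by linarith))) (Real.exp_pos _)

lemma gtb_phi_cont : Continuous gtb_phi := by
  unfold gtb_phi; fun_prop

lemma gtb_phi_integrable : Integrable gtb_phi := gtb_phi_eq ▸ integrable_gaussianPDFReal 0 1

noncomputable def gtbQ (y : ℝ) : ℝ := ((gaussianReal 0 1) (Set.Ioi y)).toReal

lemma gtbQ_eq (y : ℝ) : gtbQ y = ∫ x in Set.Ioi y, gtb_phi x := by
  rw [gtbQ, gaussianReal_apply_eq_integral 0 one_ne_zero, gtb_phi_eq,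
    ENNReal.toReal_ofReal]
  exact setIntegral_nonneg measurableSet_Ioi fun x _ => (gtb_phi_pos x).le

lemma gtbQ_sub (a b : ℝ) (hab : a ≤ b) : gtbQ a - gtbQ b = ∫ x in a..b, gtb_phi x := by
  rw [gtbQ_eq, gtbQ_eq, intervalIntegral.integral_of_le hab]
  have : Set.Ioi a = Set.Ioc a b ∪ Set.Ioi b := by
    rw [Set.Ioc_union_Ioi_eq_Ioi hab]
  rw [this, setIntegral_union (Set.Ioc_disjoint_Ioi le_rfl) measurableSet_Ioi
    (gtb_phi_integrable.integrableOn) (gtb_phi_integrable.integrableOn)]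
  ring

lemma gtbQ_eq' (y : ℝ) : gtbQ y = gtbQ 0 - ∫ x in (0:ℝ)..y, gtb_phi x := by
  rcases le_total 0 y with h | h
  · have := gtbQ_sub 0 y h; linarith
  · have := gtbQ_sub y 0 h
    rw [intervalIntegral.integral_symm] at this
    linarith

lemma gtbQ_hasDeriv (y : ℝ) : HasDerivAt gtbQ (-(gtb_phi y)) y := by
  have h1 : HasDerivAt (fun u => ∫ x in (0:ℝ)..u, gtb_phi x) (gtb_phi y) y := by
    refine intervalIntegral.integral_hasDerivAt_right
      gtb_phi_integrable.intervalIntegrable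
      (gtb_phi_cont.stronglyMeasurableAtFilter _ _) gtb_phi_cont.continuousAt
  have h2 : HasDerivAt (fun u => gtbQ 0 - ∫ x in (0:ℝ)..u, gtb_phi x) (-(gtb_phi y)) y := by
    exact h1.const_sub (gtbQ 0)
  convert h2 using 1
  ext u
  exact gtbQ_eq' u

lemma gtbQ_tendsto : Tendsto gtbQ atTop (nhds 0) := by
  have h : Tendsto (fun y => (gaussianReal 0 1) (Set.Ioi y)) atTop
      (nhds ((gaussianReal 0 1) (⋂ y : ℝ, Set.Ioi y))) := by
    refine tendsto_measure_iInter_atTop (fun y => measurableSet_Ioi.nullMeasurableSet)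
      (fun a b hab => Set.Ioi_subset_Ioi hab) ⟨0, measure_ne_top _ _⟩
  have he : (⋂ y : ℝ, Set.Ioi y) = ∅ := by
    ext x
    simp only [Set.mem_iInter, Set.mem_Ioi, Set.mem_empty_iff_false, iff_false, not_forall, not_lt]
    exact ⟨x, le_rfl⟩
  rw [he, measure_empty] at h
  have := (ENNReal.tendsto_toReal (by simp)).comp h
  rw [ENNReal.toReal_zero] at this
  exact this

lemma gtbQ_half : gtbQ 0 = 1/2 := by
  have h1 : (∫ x in Set.Iic (0:ℝ), gtb_phi x) = ∫ x in Set.Ioi (0:ℝ), gtb_phi x := by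
    have : (∫ x in Set.Iic (0:ℝ), gtb_phi (-x)) = ∫ x in Set.Ioi (-(0:ℝ)), gtb_phi x :=
      integral_comp_neg_Iic 0 gtb_phi
    simp only [neg_zero] at this
    rw [← this]
    congr 1
    ext x
    simp [gtb_phi, neg_sq]
  have h2 : (∫ x in Set.Iic (0:ℝ), gtb_phi x) + (∫ x in Set.Ioi (0:ℝ), gtb_phi x)
      = ∫ x, gtb_phi x :=
    intervalIntegral.integral_Iic_add_Ioi gtb_phi_integrable.integrableOn gtb_phi_integrable.integrableOn
  have h3 : (∫ x, gtb_phi x) = 1 := by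
    rw [← gtb_phi_eq]; exact integral_gaussianPDFReal_eq_one 0 one_ne_zero
  rw [gtbQ_eq]
  rw [h1, h3] at h2
  linarith

noncomputable def gtbG (c y : ℝ) : ℝ := gtbQ y - 2/(y + Real.sqrt (y^2+c)) * gtb_phi y

lemma gtb_sqrt_pos (c y : ℝ) (hc : 0 < c) : 0 < Real.sqrt (y^2+c) :=
  Real.sqrt_pos.2 (by positivity)

lemma gtb_add_sqrt_pos (c y : ℝ) (hc : 0 < c) : 0 < y + Real.sqrt (y^2+c) := by
  have h1 : |y| < Real.sqrt (y^2+c) := by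
    rw [← Real.sqrt_sq_eq_abs]
    exact Real.sqrt_lt_sqrt (sq_nonneg y) (by linarith)
  have := neg_abs_le y
  linarith

lemma gtb_phi_hasDeriv (y : ℝ) : HasDerivAt gtb_phi (-y * gtb_phi y) y := by
  have h1 : HasDerivAt (fun x : ℝ => -x^2/2) (-y) y := by
    have := ((hasDerivAt_pow 2 y).neg).div_const 2
    refine this.congr_deriv ?_; push_cast; ring
  have h2 := (Real.hasDerivAt_exp (-y^2/2)).comp y h1
  have h3 := h2.const_mul (Real.sqrt (2 * Real.pi))⁻¹
  have : gtb_phi = fun x => (Real.sqrt (2 * Real.pi))⁻¹ * Real.exp (-x^2/2) := rfl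
  rw [this]
  refine h3.congr_deriv ?_
  simp [gtb_phi, Function.comp]; ring

lemma gtbG_hasDeriv (c : ℝ) (hc : 0 < c) (y : ℝ) :
    HasDerivAt (gtbG c)
      (gtb_phi y * (y * Real.sqrt (y^2+c) - y^2 - c + 2)
        / (Real.sqrt (y^2+c) * (y + Real.sqrt (y^2+c)))) y := by
  have hs : 0 < Real.sqrt (y^2+c) := gtb_sqrt_pos c y hc
  have hys : 0 < y + Real.sqrt (y^2+c) := gtb_add_sqrt_pos c y hc
  have hs2 : Real.sqrt (y^2+c)^2 = y^2 + c := Real.sq_sqrt (by positivity)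
  set s := Real.sqrt (y^2+c) with hs_def
  have hinner : HasDerivAt (fun x : ℝ => x^2 + c) (2*y) y := by
    simpa using (hasDerivAt_pow 2 y).add_const c
  have hsder : HasDerivAt (fun x => Real.sqrt (x^2+c)) (y / s) y := by
    have := (Real.hasDerivAt_sqrt (by positivity : y^2 + c ≠ 0)).comp y hinner
    refine this.congr_deriv ?_
    rw [← hs_def]; field_simp
  have hden : HasDerivAt (fun x => x + Real.sqrt (x^2+c)) (1 + y/s) y :=
    (hasDerivAt_id y).add hsder
  have hh : HasDerivAt (fun x => 2/(x + Real.sqrt (x^2+c)))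
      (2 * (-(1 + y/s) / (y+s)^2)) y := by
    have hinv := (hden.inv (by rw [← hs_def]; exact hys.ne')).const_mul (2:ℝ)
    simp only [div_eq_mul_inv]
    exact hinv
  have hprod := hh.mul (gtb_phi_hasDeriv y)
  have hG := (gtbQ_hasDeriv y).sub hprod
  have : gtbG c = fun y => gtbQ y - 2/(y + Real.sqrt (y^2+c)) * gtb_phi y := rfl
  rw [this]
  refine hG.congr_deriv ?_
  symm
  rw [← hs_def]
  have hphi := gtb_phi_pos y
  field_simp
  linear_combination (y + s) * hs2

lemma gtbG_cont (c : ℝ) (hc : 0 < c) : Continuous (gtbG c) :=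
  continuous_iff_continuousAt.2 fun y =>
    (gtbG_hasDeriv c hc y).differentiableAt.continuousAt

lemma gtbG_tendsto (c : ℝ) (hc : 0 < c) : Tendsto (gtbG c) atTop (nhds 0) := by
  have h1 : Tendsto (fun y : ℝ => 2/(y + Real.sqrt (y^2+c))) atTop (nhds 0) := by
    have hd : Tendsto (fun y : ℝ => y + Real.sqrt (y^2+c)) atTop atTop :=
      tendsto_atTop_mono (fun y => le_add_of_nonneg_right (Real.sqrt_nonneg _))
        tendsto_id
    simpa [div_eq_mul_inv] using hd.inv_tendsto_atTop.const_mul (2:ℝ)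
  have h2 : Tendsto gtb_phi atTop (nhds 0) := by
    have he : Tendsto (fun y : ℝ => Real.exp (-y^2/2)) atTop (nhds 0) := by
      have hsq : Tendsto (fun y : ℝ => y^2/2) atTop atTop :=
        (tendsto_pow_atTop two_ne_zero).atTop_div_const (by norm_num)
      have := (Real.tendsto_exp_atTop.comp hsq).inv_tendsto_atTop
      refine this.congr fun y => ?_
      simp [← Real.exp_neg, neg_div]
    have h := he.const_mul (Real.sqrt (2 * Real.pi))⁻¹
    rw [mul_zero] at h
    exact h
  have := gtbQ_tendsto.sub (h1.mul h2)
  simp only [mul_zero, sub_zero] at this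
  exact this

lemma gtbG4_deriv_neg (x : ℝ) : deriv (gtbG 4) x < 0 := by
  rw [(gtbG_hasDeriv 4 (by norm_num) x).deriv]
  have hs : 0 < Real.sqrt (x^2+4) := gtb_sqrt_pos 4 x (by norm_num)
  have hys : 0 < x + Real.sqrt (x^2+4) := gtb_add_sqrt_pos 4 x (by norm_num)
  have hs2 : Real.sqrt (x^2+4)^2 = x^2 + 4 := Real.sq_sqrt (by positivity)
  set s := Real.sqrt (x^2+4)
  have hM : x * s - x^2 - 4 + 2 < 0 := by
    nlinarith [sq_nonneg (x - s), sq_nonneg (x + s)]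
  exact div_neg_of_neg_of_pos
    (mul_neg_of_pos_of_neg (gtb_phi_pos x) hM) (mul_pos hs hys)

lemma gtbG4_pos (y : ℝ) : 0 < gtbG 4 y := by
  have hanti : StrictAnti (gtbG 4) :=
    strictAnti_of_deriv_neg gtbG4_deriv_neg
  have h1 : gtbG 4 (y+1) ≤ gtbG 4 y := (hanti (by linarith)).le
  have h2 : (0:ℝ) ≤ gtbG 4 (y+1) := by
    refine le_of_tendsto (gtbG_tendsto 4 (by norm_num)) ?_
    filter_upwards [eventually_ge_atTop (y+1)] with z hz
    exact hanti.antitone hz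
  have h3 : gtbG 4 (y+1) < gtbG 4 y := hanti (by linarith)
  linarith

noncomputable def gtbc : ℝ := 8 / Real.pi
noncomputable def gtbY : ℝ := (gtbc - 2) / Real.sqrt (4 - gtbc)

lemma gtbc_gt_two : 2 < gtbc := by
  have h2 := Real.pi_lt_d2
  have := Real.pi_pos
  rw [gtbc, lt_div_iff₀ Real.pi_pos]; linarith

lemma gtbc_lt_four : gtbc < 4 := by
  have h1 := Real.pi_gt_three
  rw [gtbc, div_lt_iff₀ Real.pi_pos]; linarith

lemma gtbc_pos : 0 < gtbc := by linarith [gtbc_gt_two]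

lemma gtbY_pos : 0 < gtbY := by
  have h1 := gtbc_gt_two
  have h2 := gtbc_lt_four
  exact div_pos (by linarith) (Real.sqrt_pos.2 (by linarith))

lemma gtbG_deriv_neg_small (x : ℝ) (hx : 0 < x) (hxY : x < gtbY) :
    deriv (gtbG gtbc) x < 0 := by
  have hc2 := gtbc_gt_two
  have hc4 := gtbc_lt_four
  have hc := gtbc_pos
  rw [(gtbG_hasDeriv gtbc hc x).deriv]
  have hs : 0 < Real.sqrt (x^2+gtbc) := gtb_sqrt_pos gtbc x hc
  have hys : 0 < x + Real.sqrt (x^2+gtbc) := gtb_add_sqrt_pos gtbc x hc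
  have hs2 : Real.sqrt (x^2+gtbc)^2 = x^2 + gtbc := Real.sq_sqrt (by positivity)
  set s := Real.sqrt (x^2+gtbc)
  have hsq4 : 0 < Real.sqrt (4 - gtbc) := Real.sqrt_pos.2 (by linarith)
  have hsq4' : Real.sqrt (4 - gtbc)^2 = 4 - gtbc := Real.sq_sqrt (by linarith)
  have hA1 : x * Real.sqrt (4 - gtbc) < gtbc - 2 := by
    rw [gtbY, lt_div_iff₀ hsq4] at hxY
    exact hxY
  have hA : x^2 * (4 - gtbc) < (gtbc - 2)^2 := by
    nlinarith [mul_pos hx hsq4]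
  have hM : x * s - x^2 - gtbc + 2 < 0 := by
    have hpos : 0 < x * s + x^2 + gtbc - 2 := by nlinarith [mul_pos hx hs]
    nlinarith [mul_pos hx hs]
  exact div_neg_of_neg_of_pos
    (mul_neg_of_pos_of_neg (gtb_phi_pos x) hM) (mul_pos hs hys)

lemma gtbG_deriv_pos_large (x : ℝ) (hxY : gtbY < x) :
    0 < deriv (gtbG gtbc) x := by
  have hc2 := gtbc_gt_two
  have hc4 := gtbc_lt_four
  have hc := gtbc_pos
  have hx : 0 < x := lt_trans gtbY_pos hxY
  rw [(gtbG_hasDeriv gtbc hc x).deriv]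
  have hs : 0 < Real.sqrt (x^2+gtbc) := gtb_sqrt_pos gtbc x hc
  have hys : 0 < x + Real.sqrt (x^2+gtbc) := gtb_add_sqrt_pos gtbc x hc
  have hs2 : Real.sqrt (x^2+gtbc)^2 = x^2 + gtbc := Real.sq_sqrt (by positivity)
  set s := Real.sqrt (x^2+gtbc)
  have hsq4 : 0 < Real.sqrt (4 - gtbc) := Real.sqrt_pos.2 (by linarith)
  have hsq4' : Real.sqrt (4 - gtbc)^2 = 4 - gtbc := Real.sq_sqrt (by linarith)
  have hA1 : gtbc - 2 < x * Real.sqrt (4 - gtbc) := by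
    rw [gtbY, div_lt_iff₀ hsq4] at hxY
    exact hxY
  have hA : (gtbc - 2)^2 < x^2 * (4 - gtbc) := by
    nlinarith [mul_pos hx hsq4]
  have hM : 0 < x * s - x^2 - gtbc + 2 := by
    have hpos : 0 < x * s + x^2 + gtbc - 2 := by nlinarith [mul_pos hx hs]
    nlinarith [mul_pos hx hs]
  exact div_pos (mul_pos (gtb_phi_pos x) hM) (mul_pos hs hys)

lemma gtb_sqrt16 : Real.sqrt (8/Real.pi) * Real.sqrt (2*Real.pi) = 4 := by
  have := Real.pi_pos
  rw [← Real.sqrt_mul (by positivity)]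
  rw [show 8/Real.pi * (2*Real.pi) = 16 by field_simp; ring]
  rw [show (16:ℝ) = 4^2 by norm_num, Real.sqrt_sq (by norm_num)]

lemma gtbG_zero : gtbG gtbc 0 = 0 := by
  have hπ := Real.pi_pos
  have h4 := gtb_sqrt16
  have hs : 0 < Real.sqrt (8/Real.pi) := Real.sqrt_pos.2 (by positivity)
  have h2π : 0 < Real.sqrt (2*Real.pi) := Real.sqrt_pos.2 (by positivity)
  have : gtbG gtbc 0 = 1/2 - 2/(Real.sqrt (8/Real.pi)) * (Real.sqrt (2*Real.pi))⁻¹ := by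
    rw [gtbG, gtbQ_half, gtbc]
    norm_num [gtb_phi]
  rw [this]
  set a := Real.sqrt (8/Real.pi)
  set b := Real.sqrt (2*Real.pi)
  field_simp
  linarith

lemma gtbG_upper (y : ℝ) (hy : 0 < y) : gtbG gtbc y ≤ 0 := by
  have hc := gtbc_pos
  have hanti : StrictAntiOn (gtbG gtbc) (Set.Icc 0 gtbY) := by
    apply strictAntiOn_of_deriv_neg (convex_Icc _ _) ((gtbG_cont gtbc hc).continuousOn)
    intro x hx
    rw [interior_Icc] at hx
    exact gtbG_deriv_neg_small x hx.1 hx.2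
  have hmono : StrictMonoOn (gtbG gtbc) (Set.Ici gtbY) := by
    apply strictMonoOn_of_deriv_pos (convex_Ici _) ((gtbG_cont gtbc hc).continuousOn)
    intro x hx
    rw [interior_Ici] at hx
    exact gtbG_deriv_pos_large x hx
  rcases le_or_gt y gtbY with h | h
  · have := hanti (Set.mem_Icc.2 ⟨le_rfl, gtbY_pos.le⟩) (Set.mem_Icc.2 ⟨hy.le, h⟩) hy
    rw [gtbG_zero] at this
    linarith
  · refine ge_of_tendsto (gtbG_tendsto gtbc hc) ?_
    filter_upwards [eventually_ge_atTop y] with z hz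
    exact hmono.monotoneOn (Set.mem_Ici.2 h.le) (Set.mem_Ici.2 (h.le.trans hz)) hz

lemma gtb_sqrt2pi : Real.sqrt (2/Real.pi) * Real.sqrt (2*Real.pi) = 2 := by
  have := Real.pi_pos
  rw [← Real.sqrt_mul (by positivity)]
  rw [show 2/Real.pi * (2*Real.pi) = 4 by field_simp; ring]
  rw [show (4:ℝ) = 2^2 by norm_num, Real.sqrt_sq (by norm_num)]

lemma gtb_conv (y c' : ℝ) (hc' : 0 < c') :
    Real.sqrt (2/Real.pi) * Real.exp (-y^2/2) / (y + Real.sqrt (y^2+c'))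
      = 2/(y + Real.sqrt (y^2+c')) * gtb_phi y := by
  have := Real.pi_pos
  have hd := gtb_add_sqrt_pos c' y hc'
  have h2π : 0 < Real.sqrt (2*Real.pi) := Real.sqrt_pos.2 (by positivity)
  have hab := gtb_sqrt2pi
  rw [gtb_phi]
  set a := Real.sqrt (2/Real.pi)
  set b := Real.sqrt (2*Real.pi)
  set s := Real.sqrt (y^2+c')
  field_simp
  linear_combination hab

theorem gaussian_tail_bound (y : ℝ) (hy : 0 < y) :
    Real.sqrt (2 / Real.pi) * Real.exp (-y ^ 2 / 2) / (y + Real.sqrt (y ^ 2 + 4))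
      < ((gaussianReal 0 1) (Set.Ioi y)).toReal ∧
    ((gaussianReal 0 1) (Set.Ioi y)).toReal
      ≤ Real.sqrt (2 / Real.pi) * Real.exp (-y ^ 2 / 2)
          / (y + Real.sqrt (y ^ 2 + 8 / Real.pi)) := by
  have hπ := Real.pi_pos
  constructor
  · have hG := gtbG4_pos y
    rw [gtbG] at hG
    have h := gtb_conv y 4 (by norm_num)
    rw [show ((gaussianReal 0 1) (Set.Ioi y)).toReal = gtbQ y from rfl]
    calc Real.sqrt (2 / Real.pi) * Real.exp (-y ^ 2 / 2) / (y + Real.sqrt (y ^ 2 + 4))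
        = 2/(y + Real.sqrt (y^2+4)) * gtb_phi y := h
      _ < gtbQ y := by linarith
  · have hG := gtbG_upper y hy
    rw [gtbG, gtbc] at hG
    have h := gtb_conv y (8/Real.pi) (by positivity)
    rw [show ((gaussianReal 0 1) (Set.Ioi y)).toReal = gtbQ y from rfl]
    calc gtbQ y ≤ 2/(y + Real.sqrt (y^2+8/Real.pi)) * gtb_phi y := by linarith
      _ = Real.sqrt (2 / Real.pi) * Real.exp (-y ^ 2 / 2) / (y + Real.sqrt (y ^ 2 + 8/Real.pi)) := h.symm
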